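/- For s > 0 and z ≠ 0, the eigenvalues of the Hermitian matrix Ω(√-1 z) = i·Ω(z) (equivalently, i times the skew-symmetric real matrix Ω(z)) are exactly ±(‖μ‖ + ‖ν‖) and ±(‖μ‖ - ‖ν‖). -/

import Mathlib

open scoped BigOperators Matrix

section AuxSpec

open Matrix Complex

variable {N : ℕ}

lemma aux_mem_spectrum2 (M : Matrix (Fin N ⊕ Fin N) (Fin N ⊕ Fin N) ℂ) (lam : ℂ) :
    lam ∈ spectrum ℂ M ↔ ∃ v, v ≠ 0 ∧ M.mulVec v = lam • v := by
  rw [spectrum.mem_iff]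
  have halg : (algebraMap ℂ (Matrix (Fin N ⊕ Fin N) (Fin N ⊕ Fin N) ℂ)) lam = lam • 1 :=
    Algebra.algebraMap_eq_smul_one lam
  rw [halg, Matrix.isUnit_iff_isUnit_det, isUnit_iff_ne_zero, not_not,
    ← Matrix.exists_mulVec_eq_zero_iff]
  constructor
  · rintro ⟨v, hv, h⟩
    refine ⟨v, hv, ?_⟩
    rw [Matrix.sub_mulVec, Matrix.smul_mulVec, Matrix.one_mulVec, sub_eq_zero] at h
    exact h.symm
  · rintro ⟨v, hv, h⟩
    refine ⟨v, hv, ?_⟩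
    rw [Matrix.sub_mulVec, Matrix.smul_mulVec, Matrix.one_mulVec, h, sub_self]

lemma aux_map_smul_one (c : ℝ) :
    ((c • (1 : Matrix (Fin N) (Fin N) ℝ)).map Complex.ofReal) = (c : ℂ) • 1 := by
  ext i j
  simp [Matrix.map_apply, Matrix.one_apply]
  split_ifs <;> simp

lemma aux_map_mul (M P : Matrix (Fin N) (Fin N) ℝ) :
    (M.map Complex.ofReal) * (P.map Complex.ofReal) = (M * P).map Complex.ofReal :=
  (Matrix.map_mul (L := M) (M := P) (f := Complex.ofRealHom)).symm

lemma aux_map_neg (M : Matrix (Fin N) (Fin N) ℝ) :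
    (-M).map Complex.ofReal = -(M.map Complex.ofReal) := by
  ext i j; simp [Matrix.map_apply]

lemma aux_map_eq_smul_one {M P : Matrix (Fin N) (Fin N) ℝ} (c : ℝ) (h : M * P = c • 1) :
    (M.map Complex.ofReal) * (P.map Complex.ofReal) = (c : ℂ) • 1 := by
  rw [aux_map_mul, h, aux_map_smul_one]

lemma aux_sq_zero (M : Matrix (Fin N) (Fin N) ℝ) (h : M * Mᵀ = 0) : M = 0 := by
  ext i j
  have h1 : (M * Mᵀ) i i = 0 := by rw [h]; rfl
  rw [Matrix.mul_apply] at h1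
  have h2 : ∀ k ∈ Finset.univ, M i k * Mᵀ k i = 0 :=
    (Finset.sum_eq_zero_iff_of_nonneg (fun k _ => by
      rw [Matrix.transpose_apply]; exact mul_self_nonneg _)).mp h1
  have h3 := h2 j (Finset.mem_univ j)
  rw [Matrix.transpose_apply] at h3
  simpa using mul_self_eq_zero.mp h3

lemma aux_exists_eigen (hN : 0 < N) (A : Matrix (Fin N) (Fin N) ℝ) (hA : Aᵀ = -A)
    (t : ℝ) (hA2 : A * A = (-(t^2)) • (1 : Matrix (Fin N) (Fin N) ℝ)) :
    ∃ x : Fin N → ℂ, x ≠ 0 ∧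
      (A.map Complex.ofReal).mulVec x = ((t : ℂ) * Complex.I) • x := by
  set A' : Matrix (Fin N) (Fin N) ℂ := A.map Complex.ofReal with hA'
  have hA2' : A' * A' = (-((t:ℂ)^2)) • 1 := by
    rw [hA', aux_map_eq_smul_one (-(t^2)) hA2]
    norm_cast
  have hsq : ((t:ℂ)*Complex.I) * ((t:ℂ)*Complex.I) = -((t:ℂ)^2) := by
    have := Complex.I_mul_I
    linear_combination ((t:ℂ)^2) * this
  set C : Matrix (Fin N) (Fin N) ℂ := ((t : ℂ) * Complex.I) • 1 - A' with hC
  have hprod : C * (((t : ℂ) * Complex.I) • 1 + A') = 0 := by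
    rw [hC, Matrix.sub_mul, Matrix.mul_add, Matrix.mul_add]
    simp only [Matrix.smul_mul, Matrix.mul_smul, Matrix.one_mul, Matrix.mul_one, hA2',
      smul_smul, hsq]
    abel
  by_cases hdet : C.det = 0
  · obtain ⟨v, hv, hCv⟩ := (Matrix.exists_mulVec_eq_zero_iff).mpr hdet
    refine ⟨v, hv, ?_⟩
    rw [hC, Matrix.sub_mulVec, Matrix.smul_mulVec, Matrix.one_mulVec, sub_eq_zero] at hCv
    exact hCv.symm
  · have hdet' : IsUnit C.det := isUnit_iff_ne_zero.mpr hdet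
    have hX : ((t : ℂ) * Complex.I) • (1 : Matrix (Fin N) (Fin N) ℂ) + A' = 0 := by
      have h2 : C⁻¹ * (C * (((t : ℂ) * Complex.I) • 1 + A')) = 0 := by
        rw [hprod, Matrix.mul_zero]
      rwa [← Matrix.mul_assoc, Matrix.nonsing_inv_mul C hdet', Matrix.one_mul] at h2
    obtain ⟨j⟩ : Nonempty (Fin N) := ⟨⟨0, hN⟩⟩
    have hAjj : A j j = 0 := by
      have := congrFun (congrFun hA j) j
      rw [Matrix.transpose_apply, Matrix.neg_apply] at this
      linarith
    have hentry := congrFun (congrFun hX j) j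
    simp only [Matrix.add_apply, Matrix.smul_apply, Matrix.one_apply_eq, smul_eq_mul, mul_one,
      Matrix.zero_apply, hA', Matrix.map_apply, hAjj, Complex.ofReal_zero, add_zero] at hentry
    have ht : (t : ℂ) = 0 := by
      rcases mul_eq_zero.mp hentry with h | h
      · exact h
      · exact absurd h Complex.I_ne_zero
    have hA0 : A' = 0 := by
      have := hX
      rw [ht] at this
      simpa using this
    refine ⟨fun _ => 1, ?_, ?_⟩
    · intro h
      have := congrFun h j
      simp at this
    · rw [hA0, ht]
      simp

end AuxSpec

/-- For `s > 0` and `z = (μ,ν) ≠ 0`, the eigenvalues of the Hermitian matrix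
`i·Ω(z)` (with `Ω(z) = [[-A(μ), B(ν)],[-B(ν)ᵀ, D(μ)]]` real skew-symmetric)
are exactly `±(‖μ‖ + ‖ν‖)` and `±(‖μ‖ - ‖ν‖)`. -/
theorem statement8 {r s N : ℕ} (hs : 0 < s) (hN : 0 < N)
    (μ : Fin r → ℝ) (ν : Fin s → ℝ) (hz : ¬(μ = 0 ∧ ν = 0))
    (A B D : Matrix (Fin N) (Fin N) ℝ)
    (hA : Aᵀ = -A) (hD : Dᵀ = -D)
    (hA2 : A * A = (-(∑ i, μ i ^ 2)) • (1 : Matrix (Fin N) (Fin N) ℝ))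
    (hD2 : D * D = (-(∑ i, μ i ^ 2)) • (1 : Matrix (Fin N) (Fin N) ℝ))
    (hB1 : B * Bᵀ = (∑ j, ν j ^ 2) • (1 : Matrix (Fin N) (Fin N) ℝ))
    (hB2 : Bᵀ * B = (∑ j, ν j ^ 2) • (1 : Matrix (Fin N) (Fin N) ℝ))
    (hBAB : Bᵀ * A * B + (∑ j, ν j ^ 2) • D = 0)
    (hAB : A * B + B * D = 0) :
    spectrum ℂ (Complex.I •
        (Matrix.fromBlocks (-A) B (-Bᵀ) D).map (Complex.ofReal))
      = {((Real.sqrt (∑ i, μ i ^ 2) + Real.sqrt (∑ j, ν j ^ 2) : ℝ) : ℂ),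
         (-(Real.sqrt (∑ i, μ i ^ 2) + Real.sqrt (∑ j, ν j ^ 2) : ℝ) : ℂ),
         ((Real.sqrt (∑ i, μ i ^ 2) - Real.sqrt (∑ j, ν j ^ 2) : ℝ) : ℂ),
         (-(Real.sqrt (∑ i, μ i ^ 2) - Real.sqrt (∑ j, ν j ^ 2) : ℝ) : ℂ)} := by
  classical
  set a : ℝ := ∑ i, μ i ^ 2 with ha_def
  set b : ℝ := ∑ j, ν j ^ 2 with hb_def
  have ha0 : 0 ≤ a := Finset.sum_nonneg fun i _ => sq_nonneg _
  have hb0 : 0 ≤ b := Finset.sum_nonneg fun j _ => sq_nonneg _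
  set a' : ℝ := Real.sqrt a with ha'_def
  set b' : ℝ := Real.sqrt b with hb'_def
  have ha'2 : a' ^ 2 = a := Real.sq_sqrt ha0
  have hb'2 : b' ^ 2 = b := Real.sq_sqrt hb0
  have ca : (a' : ℂ) ^ 2 = (a : ℂ) := by exact_mod_cast congrArg Complex.ofReal ha'2
  have cb : (b' : ℂ) ^ 2 = (b : ℂ) := by exact_mod_cast congrArg Complex.ofReal hb'2
  set A' : Matrix (Fin N) (Fin N) ℂ := A.map Complex.ofReal with hA'def
  set B' : Matrix (Fin N) (Fin N) ℂ := B.map Complex.ofReal with hB'def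
  set D' : Matrix (Fin N) (Fin N) ℂ := D.map Complex.ofReal with hD'def
  set Ω : Matrix (Fin N ⊕ Fin N) (Fin N ⊕ Fin N) ℂ :=
    Matrix.fromBlocks (-A') B' (-B'ᵀ) D' with hΩdef
  have hmap : (Matrix.fromBlocks (-A) B (-Bᵀ) D).map (Complex.ofReal) = Ω := by
    rw [Matrix.fromBlocks_map, hΩdef, hA'def, hB'def, hD'def, Matrix.fromBlocks_inj]
    exact ⟨aux_map_neg A, rfl, by rw [aux_map_neg, Matrix.transpose_map], rfl⟩
  rw [hmap]
  set M : Matrix (Fin N ⊕ Fin N) (Fin N ⊕ Fin N) ℂ := Complex.I • Ω with hMdef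
  -- complexified hypotheses
  have cA2 : A' * A' = (-(a : ℂ)) • 1 := by
    have := aux_map_eq_smul_one (-a) hA2
    rw [Complex.ofReal_neg] at this
    rw [hA'def]; exact this
  have cD2 : D' * D' = (-(a : ℂ)) • 1 := by
    have := aux_map_eq_smul_one (-a) hD2
    rw [Complex.ofReal_neg] at this
    rw [hD'def]; exact this
  have hBt : (Bᵀ).map Complex.ofReal = B'ᵀ := by rw [hB'def, Matrix.transpose_map]
  have cB1 : B' * B'ᵀ = (b : ℂ) • 1 := by
    have := aux_map_eq_smul_one b hB1
    rw [hBt] at this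
    rw [hB'def]; exact this
  have cB2 : B'ᵀ * B' = (b : ℂ) • 1 := by
    have := aux_map_eq_smul_one b hB2
    rw [hBt] at this
    rw [hB'def]; exact this
  have hABr : A * B = -(B * D) := eq_neg_of_add_eq_zero_left hAB
  have cAB : A' * B' = -(B' * D') := by
    rw [hA'def, hB'def, hD'def, aux_map_mul, aux_map_mul, hABr, aux_map_neg]
  have cAt : A'ᵀ = -A' := by
    rw [hA'def, ← Matrix.transpose_map, hA, aux_map_neg]
  have cDt : D'ᵀ = -D' := by
    rw [hD'def, ← Matrix.transpose_map, hD, aux_map_neg]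
  have cBA : B'ᵀ * A' = -(D' * B'ᵀ) := by
    have h1 := congrArg Matrix.transpose cAB
    rw [Matrix.transpose_mul, Matrix.transpose_neg, Matrix.transpose_mul, cAt, cDt,
      Matrix.mul_neg, Matrix.neg_mul, neg_neg] at h1
    exact neg_eq_iff_eq_neg.mp h1
  -- the square of Ω
  have hΩ2 : Ω * Ω = Matrix.fromBlocks ((-(a:ℂ)-b) • 1) ((2:ℂ) • (B'*D'))
      ((-2:ℂ) • (D'*B'ᵀ)) ((-(a:ℂ)-b) • 1) := by
    rw [hΩdef, Matrix.fromBlocks_multiply, Matrix.fromBlocks_inj]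
    refine ⟨?_, ?_, ?_, ?_⟩
    · simp only [Matrix.neg_mul, Matrix.mul_neg, neg_neg, cA2, cB1]
      module
    · simp only [Matrix.neg_mul, cAB, neg_neg]
      module
    · simp only [Matrix.neg_mul, Matrix.mul_neg, neg_neg, cBA]
      module
    · simp only [Matrix.neg_mul, cB2, cD2]
      module
  have hP1 : (B'*D') * (D'*B'ᵀ) = ((-(a:ℂ))*b) • 1 := by
    calc (B'*D') * (D'*B'ᵀ) = B' * ((D'*D') * B'ᵀ) := by
          rw [Matrix.mul_assoc, Matrix.mul_assoc]
      _ = ((-(a:ℂ))*b) • 1 := by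
          rw [cD2, Matrix.smul_mul, Matrix.one_mul, Matrix.mul_smul, cB1, smul_smul]
  have hP2 : (D'*B'ᵀ) * (B'*D') = ((-(a:ℂ))*b) • 1 := by
    calc (D'*B'ᵀ) * (B'*D') = D' * ((B'ᵀ*B') * D') := by
          rw [Matrix.mul_assoc, Matrix.mul_assoc]
      _ = ((-(a:ℂ))*b) • 1 := by
          rw [cB2, Matrix.smul_mul, Matrix.one_mul, Matrix.mul_smul, cD2, smul_smul]
          congr 1; ring
  have hkey : (Ω*Ω)*(Ω*Ω) + ((2:ℂ)*((a:ℂ)+b)) • (Ω*Ω)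
      + (((a:ℂ)-b)^2) • (1 : Matrix (Fin N ⊕ Fin N) (Fin N ⊕ Fin N) ℂ) = 0 := by
    rw [hΩ2, Matrix.fromBlocks_multiply,
      show (1 : Matrix (Fin N ⊕ Fin N) (Fin N ⊕ Fin N) ℂ) = Matrix.fromBlocks 1 0 0 1 from
        Matrix.fromBlocks_one.symm,
      Matrix.fromBlocks_smul, Matrix.fromBlocks_smul, Matrix.fromBlocks_add,
      Matrix.fromBlocks_add, ← Matrix.fromBlocks_zero, Matrix.fromBlocks_inj]
    refine ⟨?_, ?_, ?_, ?_⟩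
    · simp only [Matrix.smul_mul, Matrix.mul_smul, Matrix.one_mul, Matrix.mul_one, hP1,
        smul_smul, smul_zero, add_zero, zero_add]
      module
    · simp only [Matrix.smul_mul, Matrix.mul_smul, Matrix.one_mul, Matrix.mul_one,
        smul_smul, smul_zero, add_zero, zero_add]
      module
    · simp only [Matrix.smul_mul, Matrix.mul_smul, Matrix.one_mul, Matrix.mul_one,
        smul_smul, smul_zero, add_zero, zero_add]
      module
    · simp only [Matrix.smul_mul, Matrix.mul_smul, Matrix.one_mul, Matrix.mul_one, hP2,
        smul_smul, smul_zero, add_zero, zero_add]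
      module
  have hM2 : M*M = (-1 : ℂ) • (Ω*Ω) := by
    rw [hMdef, Matrix.smul_mul, Matrix.mul_smul, smul_smul, Complex.I_mul_I]
  have hM4 : (M*M)*(M*M) = (Ω*Ω)*(Ω*Ω) := by
    rw [hM2, Matrix.smul_mul, Matrix.mul_smul, smul_smul]
    norm_num
  have hPM : (M*M)*(M*M) - ((2:ℂ)*((a:ℂ)+b)) • (M*M)
      + (((a:ℂ)-b)^2) • (1 : Matrix (Fin N ⊕ Fin N) (Fin N ⊕ Fin N) ℂ) = 0 := by
    rw [hM4, hM2, smul_smul]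
    have h : (2*((a:ℂ)+b)) * (-1) = -(2*((a:ℂ)+b)) := by ring
    rw [h, neg_smul, sub_neg_eq_add]
    exact hkey
  -- sufficient condition for membership in the spectrum
  have spec_of : ∀ (t : ℝ) (c lam : ℂ), t^2 = a →
      ((t:ℂ) + Complex.I * c * (b:ℂ) = lam) →
      ((-Complex.I + c * (t:ℂ) = lam * c) ∨ B' = 0) →
      lam ∈ spectrum ℂ M := by
    intro t c lam ht h1 h2
    obtain ⟨x, hx0, hx⟩ := aux_exists_eigen hN A hA t (by rw [ht]; exact hA2)
    rw [← hA'def] at hx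
    set y : Fin N → ℂ := B'ᵀ.mulVec x with hy
    rw [aux_mem_spectrum2]
    refine ⟨Sum.elim x (c • y), ?_, ?_⟩
    · intro h
      exact hx0 (funext fun i => congrFun h (Sum.inl i))
    · have hBy : B'.mulVec (c • y) = (c * (b:ℂ)) • x := by
        rw [hy, Matrix.mulVec_smul, Matrix.mulVec_mulVec, cB1, Matrix.smul_mulVec,
          Matrix.one_mulVec, smul_smul]
      have hDBt : D' * B'ᵀ = -(B'ᵀ * A') := by rw [cBA, neg_neg]
      have hDy : D'.mulVec (c • y) = (-(c * ((t:ℂ) * Complex.I))) • y := by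
        rw [hy, Matrix.mulVec_smul, Matrix.mulVec_mulVec, hDBt, Matrix.neg_mulVec,
          ← Matrix.mulVec_mulVec, hx, Matrix.mulVec_smul, smul_neg, smul_smul, ← neg_smul]
      rw [hMdef, Matrix.smul_mulVec, hΩdef, Matrix.fromBlocks_mulVec,
        Sum.elim_comp_inl, Sum.elim_comp_inr, Matrix.neg_mulVec, hx, Matrix.neg_mulVec,
        hBy, hDy, ← hy]
      funext i
      rcases i with i | i
      · simp only [Pi.smul_apply, Sum.elim_inl, Pi.add_apply, Pi.neg_apply, smul_eq_mul]
        linear_combination x i * h1 - (t:ℂ) * x i * Complex.I_mul_I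
      · simp only [Pi.smul_apply, Sum.elim_inr, Pi.add_apply, Pi.neg_apply, smul_eq_mul]
        rcases h2 with h2 | hB0
        · linear_combination y i * h2 - c * (t:ℂ) * y i * Complex.I_mul_I
        · have hy0 : y = 0 := by rw [hy, hB0]; simp
          simp [hy0]
  apply Set.eq_of_subset_of_subset
  · intro lam hlam
    obtain ⟨v, hv0, hv⟩ := (aux_mem_spectrum2 M lam).mp hlam
    have e2 : (M*M).mulVec v = (lam^2) • v := by
      rw [← Matrix.mulVec_mulVec, hv, Matrix.mulVec_smul, hv, smul_smul]
      congr 1; ring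
    have e4 : ((M*M)*(M*M)).mulVec v = (lam^4) • v := by
      rw [← Matrix.mulVec_mulVec, e2, Matrix.mulVec_smul, e2, smul_smul]
      congr 1; ring
    have h0 := congrArg (fun X => Matrix.mulVec X v) hPM
    simp only [Matrix.sub_mulVec, Matrix.add_mulVec, Matrix.smul_mulVec,
      Matrix.one_mulVec, Matrix.zero_mulVec, e2, e4] at h0
    have h5 : (lam^4 - (2*((a:ℂ)+b))*lam^2 + ((a:ℂ)-b)^2) • v = 0 := by
      have hexp : (lam^4 - (2*((a:ℂ)+b))*lam^2 + ((a:ℂ)-b)^2) • v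
          = lam^4 • v - (2*((a:ℂ)+b)) • (lam^2 • v) + ((a:ℂ)-b)^2 • v := by
        rw [smul_smul]
        module
      rw [hexp, h0]
    have hc : lam^4 - (2*((a:ℂ)+b))*lam^2 + ((a:ℂ)-b)^2 = 0 := by
      rcases smul_eq_zero.mp h5 with h | h
      · exact h
      · exact absurd h hv0
    have hfac : (lam - ((a':ℂ)+(b':ℂ))) * (lam + ((a':ℂ)+(b':ℂ)))
        * ((lam - ((a':ℂ)-(b':ℂ))) * (lam + ((a':ℂ)-(b':ℂ)))) = 0 := by
      linear_combination hc
        + (-2*lam^2 + 2*((a:ℂ)-(b:ℂ)) + ((a':ℂ)^2 - (a:ℂ)) - ((b':ℂ)^2 - (b:ℂ))) * ca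
        + (-2*lam^2 - 2*((a:ℂ)-(b:ℂ)) - ((a':ℂ)^2 - (a:ℂ)) + ((b':ℂ)^2 - (b:ℂ))) * cb
    simp only [Set.mem_insert_iff, Set.mem_singleton_iff]
    push_cast
    rcases mul_eq_zero.mp hfac with h12 | h34
    · rcases mul_eq_zero.mp h12 with h | h
      · exact Or.inl (by linear_combination h)
      · exact Or.inr (Or.inl (by linear_combination h))
    · rcases mul_eq_zero.mp h34 with h | h
      · exact Or.inr (Or.inr (Or.inl (by linear_combination h)))
      · exact Or.inr (Or.inr (Or.inr (by linear_combination h)))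
  · intro lam hlam
    simp only [Set.mem_insert_iff, Set.mem_singleton_iff] at hlam
    by_cases hb : b = 0
    · have hB0 : B = 0 := aux_sq_zero B (by rw [hB1, hb, zero_smul])
      have hB'0 : B' = 0 := by
        rw [hB'def, hB0]
        ext i j; simp [Matrix.map_apply]
      have hb'0 : b' = 0 := by rw [hb'_def, hb, Real.sqrt_zero]
      rcases hlam with rfl | rfl | rfl | rfl
      · exact spec_of a' 0 _ ha'2 (by push_cast [hb'0]; ring) (Or.inr hB'0)
      · exact spec_of (-a') 0 _ (by rw [neg_sq]; exact ha'2)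
          (by push_cast [hb'0]; ring) (Or.inr hB'0)
      · exact spec_of a' 0 _ ha'2 (by push_cast [hb'0]; ring) (Or.inr hB'0)
      · exact spec_of (-a') 0 _ (by rw [neg_sq]; exact ha'2)
          (by push_cast [hb'0]; ring) (Or.inr hB'0)
    · have hbpos : 0 < b := lt_of_le_of_ne hb0 (Ne.symm hb)
      have hb'pos : 0 < b' := Real.sqrt_pos.mpr hbpos
      have hb'ne : (b' : ℂ) ≠ 0 := Complex.ofReal_ne_zero.mpr (ne_of_gt hb'pos)
      rcases hlam with rfl | rfl | rfl | rfl
      · refine spec_of a' (-Complex.I/(b':ℂ)) _ ha'2 ?_ (Or.inl ?_)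
        · push_cast
          rw [← cb]
          field_simp
          rw [Complex.I_sq]
          ring
        · push_cast
          field_simp
          ring
      · refine spec_of (-a') (Complex.I/(b':ℂ)) _ (by rw [neg_sq]; exact ha'2) ?_ (Or.inl ?_)
        · push_cast
          rw [← cb]
          field_simp
          rw [Complex.I_sq]
          ring
        · push_cast
          field_simp
          ring
      · refine spec_of a' (Complex.I/(b':ℂ)) _ ha'2 ?_ (Or.inl ?_)
        · push_cast
          rw [← cb]
          field_simp
          rw [Complex.I_sq]
          ring
        · push_cast
          field_simp
          ring
      · refine spec_of (-a') (-Complex.I/(b':ℂ)) _ (by rw [neg_sq]; exact ha'2) ?_ (Or.inl ?_)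
        · push_cast
          rw [← cb]
          field_simp
          rw [Complex.I_sq]
          ring
        · push_cast
          field_simp
          ring
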